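/- Let μ, λ ∈ ℝ. If μλ + μ + λ > 0, then Δ(μ,λ;z) → +∞ as z → 0 from the left; if μλ + μ + λ < 0, then Δ(μ,λ;z) → −∞ as z → 0 from the left; and if μλ + μ + λ = 0, then Δ(μ,λ;z) → 1 + μ as z → 0 from the left (so this limit is negative when μ < −1 and positive when μ > −1). -/

import Mathlib

open MeasureTheory Real Filter Topology Asymptotics

/-- `a(z) = (1/2π)∫_{−π}^{π} dq/(z − 1 + cos q)`. -/
noncomputable def aF (z : ℝ) : ℝ :=
  (2 * Real.pi)⁻¹ * ∫ q in (-Real.pi)..Real.pi, (z - 1 + Real.cos q)⁻¹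

/-- `b(z) = −(1/2π)∫_{−π}^{π} cos q dq/(z − 1 + cos q)`. -/
noncomputable def bF (z : ℝ) : ℝ :=
  -((2 * Real.pi)⁻¹ * ∫ q in (-Real.pi)..Real.pi, Real.cos q / (z - 1 + Real.cos q))

/-- `c(z) = (1/2π)∫_{−π}^{π} cos² q dq/(z − 1 + cos q)`. -/
noncomputable def cF (z : ℝ) : ℝ :=
  (2 * Real.pi)⁻¹ * ∫ q in (-Real.pi)..Real.pi, (Real.cos q) ^ 2 / (z - 1 + Real.cos q)

/-- The Fredholm determinant `Δ(μ,λ;z) = (1 − μ a(z))(1 − λ c(z)) − μλ b(z)²`. -/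
noncomputable def Δdet (μ lam z : ℝ) : ℝ :=
  (1 - μ * aF z) * (1 - lam * cF z) - μ * lam * (bF z) ^ 2

namespace DetLimitsAux

lemma key_integral {w : ℝ} (hw : w < -1) :
    ∫ q in (-Real.pi)..Real.pi, (w + Real.cos q)⁻¹
      = -(2 * Real.pi) / Real.sqrt (w ^ 2 - 1) := by
  have h1 : (0:ℝ) < w ^ 2 - 1 := by nlinarith
  set s := Real.sqrt (w ^ 2 - 1) with hs_def
  have hs : 0 < s := Real.sqrt_pos.mpr h1
  have hs2 : s ^ 2 = w ^ 2 - 1 := Real.sq_sqrt h1.le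
  obtain ⟨β, hβ_def⟩ : ∃ b : ℝ, b = w + s := ⟨_, rfl⟩
  have hβ0 : β < 0 := by rw [hβ_def]; nlinarith
  have hβ1 : -1 < β := by rw [hβ_def]; nlinarith
  have hb2 : β ^ 2 = 2 * w * β - 1 := by rw [hβ_def]; linear_combination hs2
  have hsb : s * β = w * β - 1 := by rw [hβ_def]; linear_combination hs2
  have hden : ∀ q : ℝ, 0 < 1 + β * Real.cos q := fun q => by
    nlinarith [Real.neg_one_le_cos q, Real.cos_le_one q]
  have hK : ∀ q : ℝ, 0 < 1 + β ^ 2 + 2 * β * Real.cos q := fun q => by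
    nlinarith [Real.neg_one_le_cos q, Real.cos_le_one q]
  have hwc : ∀ q : ℝ, w + Real.cos q < 0 := fun q => by nlinarith [Real.cos_le_one q]
  set H : ℝ → ℝ := fun q =>
    (-q + 2 * Real.arctan (β * Real.sin q / (1 + β * Real.cos q))) / s with hH_def
  have hderiv : ∀ q : ℝ, HasDerivAt H ((w + Real.cos q)⁻¹) q := by
    intro q
    have hsc : Real.sin q ^ 2 + Real.cos q ^ 2 = 1 := Real.sin_sq_add_cos_sq q
    have hnum : HasDerivAt (fun q => β * Real.sin q) (β * Real.cos q) q :=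
      (Real.hasDerivAt_sin q).const_mul β
    have hd : HasDerivAt (fun q => 1 + β * Real.cos q) (β * -Real.sin q) q :=
      ((Real.hasDerivAt_cos q).const_mul β).const_add 1
    have hu : HasDerivAt (fun q => β * Real.sin q / (1 + β * Real.cos q))
        ((β * Real.cos q * (1 + β * Real.cos q) - β * Real.sin q * (β * -Real.sin q))
          / (1 + β * Real.cos q) ^ 2) q := hnum.div hd (hden q).ne'
    have harc : HasDerivAt (fun q => Real.arctan (β * Real.sin q / (1 + β * Real.cos q)))
        ((1 / (1 + (β * Real.sin q / (1 + β * Real.cos q)) ^ 2)) *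
          ((β * Real.cos q * (1 + β * Real.cos q) - β * Real.sin q * (β * -Real.sin q))
            / (1 + β * Real.cos q) ^ 2)) q :=
      (Real.hasDerivAt_arctan _).comp q hu
    have hH : HasDerivAt H
        ((-1 + 2 * ((1 / (1 + (β * Real.sin q / (1 + β * Real.cos q)) ^ 2)) *
          ((β * Real.cos q * (1 + β * Real.cos q) - β * Real.sin q * (β * -Real.sin q))
            / (1 + β * Real.cos q) ^ 2))) / s) q :=
      ((hasDerivAt_id q).neg.add (harc.const_mul 2)).div_const s
    convert hH using 1
    have h4 : β * Real.cos q * (1 + β * Real.cos q) - β * Real.sin q * (β * -Real.sin q)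
        = β * (β + Real.cos q) := by linear_combination β ^ 2 * hsc
    have h5 : 1 + (β * Real.sin q / (1 + β * Real.cos q)) ^ 2
        = (1 + β ^ 2 + 2 * β * Real.cos q) / (1 + β * Real.cos q) ^ 2 := by
      field_simp [(hden q).ne']
      linear_combination β ^ 2 * hsc
    rw [h4, h5]
    have h6 : 1 / ((1 + β ^ 2 + 2 * β * Real.cos q) / (1 + β * Real.cos q) ^ 2) *
        (β * (β + Real.cos q) / (1 + β * Real.cos q) ^ 2)
        = β * (β + Real.cos q) / (1 + β ^ 2 + 2 * β * Real.cos q) := by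
      field_simp [(hden q).ne', (hK q).ne']
    rw [h6]
    have h7 : -1 + 2 * (β * (β + Real.cos q) / (1 + β ^ 2 + 2 * β * Real.cos q))
        = (β ^ 2 - 1) / (1 + β ^ 2 + 2 * β * Real.cos q) := by
      field_simp [(hK q).ne']
      ring
    rw [h7, div_div, eq_div_iff (mul_pos (hK q) hs).ne', inv_mul_eq_div,
      div_eq_iff (hwc q).ne]
    linear_combination (s - w - Real.cos q) * hb2 + (2 * (w + Real.cos q)) * hsb
  have hcont : Continuous fun q : ℝ => (w + Real.cos q)⁻¹ :=
    (continuous_const.add Real.continuous_cos).inv₀ fun q => (hwc q).ne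
  have hint := intervalIntegral.integral_eq_sub_of_hasDerivAt
    (a := -Real.pi) (b := Real.pi) (f := H) (f' := fun q => (w + Real.cos q)⁻¹)
    (fun x _ => hderiv x) (hcont.intervalIntegrable _ _)
  rw [hint, hH_def]
  simp only [Real.sin_pi, Real.cos_pi, Real.sin_neg, Real.cos_neg, neg_zero,
    mul_zero, zero_div, Real.arctan_zero, neg_neg]
  ring

lemma cos_integral {w : ℝ} (hw : w < -1) :
    ∫ q in (-Real.pi)..Real.pi, Real.cos q / (w + Real.cos q)
      = 2 * Real.pi + 2 * Real.pi * w / Real.sqrt (w ^ 2 - 1) := by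
  have h1 : (0:ℝ) < w ^ 2 - 1 := by nlinarith
  have hs : 0 < Real.sqrt (w ^ 2 - 1) := Real.sqrt_pos.mpr h1
  have hwc : ∀ q : ℝ, w + Real.cos q < 0 := fun q => by nlinarith [Real.cos_le_one q]
  have hcont : Continuous fun q : ℝ => (w + Real.cos q)⁻¹ :=
    (continuous_const.add Real.continuous_cos).inv₀ fun q => (hwc q).ne
  have h : ∀ q : ℝ, Real.cos q / (w + Real.cos q) = 1 - w * (w + Real.cos q)⁻¹ := by
    intro q
    field_simp [(hwc q).ne]
    ring
  rw [intervalIntegral.integral_congr (g := fun q => 1 - w * (w + Real.cos q)⁻¹)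
    (fun x _ => h x)]
  rw [intervalIntegral.integral_sub (f := fun _ => (1:ℝ)) (g := fun q => w * (w + Real.cos q)⁻¹)
    (intervalIntegrable_const)
    ((continuous_const.mul hcont).intervalIntegrable _ _),
    intervalIntegral.integral_const, intervalIntegral.integral_const_mul,
    key_integral hw]
  simp only [smul_eq_mul, mul_one]
  field_simp
  ring

lemma cossq_integral {w : ℝ} (hw : w < -1) :
    ∫ q in (-Real.pi)..Real.pi, (Real.cos q) ^ 2 / (w + Real.cos q)
      = -(2 * Real.pi) * w - 2 * Real.pi * w ^ 2 / Real.sqrt (w ^ 2 - 1) := by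
  have h1 : (0:ℝ) < w ^ 2 - 1 := by nlinarith
  have hs : 0 < Real.sqrt (w ^ 2 - 1) := Real.sqrt_pos.mpr h1
  have hwc : ∀ q : ℝ, w + Real.cos q < 0 := fun q => by nlinarith [Real.cos_le_one q]
  have hcont : Continuous fun q : ℝ => (w + Real.cos q)⁻¹ :=
    (continuous_const.add Real.continuous_cos).inv₀ fun q => (hwc q).ne
  have h : ∀ q : ℝ, (Real.cos q) ^ 2 / (w + Real.cos q)
      = (Real.cos q - w) + w ^ 2 * (w + Real.cos q)⁻¹ := by
    intro q
    field_simp [(hwc q).ne]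
    ring
  rw [intervalIntegral.integral_congr
    (g := fun q => (Real.cos q - w) + w ^ 2 * (w + Real.cos q)⁻¹) (fun x _ => h x)]
  rw [intervalIntegral.integral_add (f := fun q => Real.cos q - w)
    (g := fun q => w ^ 2 * (w + Real.cos q)⁻¹)
    ((Real.continuous_cos.sub continuous_const).intervalIntegrable _ _)
    ((continuous_const.mul hcont).intervalIntegrable _ _),
    intervalIntegral.integral_sub (Real.continuous_cos.intervalIntegrable _ _)
      intervalIntegrable_const,
    integral_cos, intervalIntegral.integral_const,
    intervalIntegral.integral_const_mul, key_integral hw]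
  simp only [Real.sin_pi, Real.sin_neg, smul_eq_mul, mul_one]
  field_simp
  ring

lemma sq_pos {z : ℝ} (hz : z < 0) : 0 < z ^ 2 - 2 * z := by nlinarith

lemma wsq {z : ℝ} : (z - 1) ^ 2 - 1 = z ^ 2 - 2 * z := by ring

lemma aF_eq {z : ℝ} (hz : z < 0) : aF z = -(Real.sqrt (z ^ 2 - 2 * z))⁻¹ := by
  have hw : z - 1 < -1 := by linarith
  have h := key_integral hw
  rw [wsq] at h
  have hS : 0 < Real.sqrt (z ^ 2 - 2 * z) := Real.sqrt_pos.mpr (sq_pos hz)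
  rw [aF, h]
  field_simp [Real.pi_ne_zero]

lemma bF_eq {z : ℝ} (hz : z < 0) :
    bF z = -(1 + (z - 1) / Real.sqrt (z ^ 2 - 2 * z)) := by
  have hw : z - 1 < -1 := by linarith
  have h := cos_integral hw
  rw [wsq] at h
  have hS : 0 < Real.sqrt (z ^ 2 - 2 * z) := Real.sqrt_pos.mpr (sq_pos hz)
  rw [bF, h]
  field_simp [Real.pi_ne_zero]

lemma cF_eq {z : ℝ} (hz : z < 0) :
    cF z = (1 - z) - (z - 1) ^ 2 / Real.sqrt (z ^ 2 - 2 * z) := by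
  have hw : z - 1 < -1 := by linarith
  have h := cossq_integral hw
  rw [wsq] at h
  have hS : 0 < Real.sqrt (z ^ 2 - 2 * z) := Real.sqrt_pos.mpr (sq_pos hz)
  rw [cF, h]
  field_simp [Real.pi_ne_zero]
  ring

lemma delta_formula (μ lam : ℝ) {z : ℝ} (hz : z < 0) :
    Δdet μ lam z = (1 + lam * (z - 1) - μ * lam)
      + (lam * z - 2 * lam - μ * lam) * (z / Real.sqrt (z ^ 2 - 2 * z))
      + (μ * lam + μ + lam) * (Real.sqrt (z ^ 2 - 2 * z))⁻¹ := by
  have hS : 0 < Real.sqrt (z ^ 2 - 2 * z) := Real.sqrt_pos.mpr (sq_pos hz)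
  rw [Δdet, aF_eq hz, bF_eq hz, cF_eq hz]
  field_simp
  ring

lemma zdivS {z : ℝ} (hz : z < 0) :
    z / Real.sqrt (z ^ 2 - 2 * z) = -Real.sqrt (z / (z - 2)) := by
  have hS : 0 < Real.sqrt (z ^ 2 - 2 * z) := Real.sqrt_pos.mpr (sq_pos hz)
  have h2 : (0:ℝ) < 2 - z := by linarith
  have hq : z / (z - 2) = (-z) / (2 - z) := by
    rw [div_eq_div_iff (by linarith) h2.ne']
    ring
  have hr : Real.sqrt (z / (z - 2)) * Real.sqrt (z ^ 2 - 2 * z) = -z := by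
    rw [hq, ← Real.sqrt_mul (div_nonneg (by linarith) h2.le)]
    have : -z / (2 - z) * (z ^ 2 - 2 * z) = (-z) ^ 2 := by
      field_simp
      ring
    rw [this, Real.sqrt_sq (by linarith)]
  rw [div_eq_iff hS.ne', neg_mul, hr, neg_neg]

lemma tendsto_zdivS :
    Tendsto (fun z : ℝ => z / Real.sqrt (z ^ 2 - 2 * z)) (𝓝[<] (0:ℝ)) (𝓝 0) := by
  have hc : ContinuousAt (fun z : ℝ => -Real.sqrt (z / (z - 2))) 0 := by
    apply ContinuousAt.neg
    apply (Real.continuous_sqrt.continuousAt).comp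
    exact continuousAt_id.div (continuousAt_id.sub continuousAt_const) (by norm_num)
  have := (hc.tendsto.mono_left nhdsWithin_le_nhds : Tendsto _ (𝓝[<] (0:ℝ)) _)
  norm_num at this
  refine this.congr' ?_
  filter_upwards [self_mem_nhdsWithin] with z hz
  exact (zdivS hz).symm

lemma tendsto_invS :
    Tendsto (fun z : ℝ => (Real.sqrt (z ^ 2 - 2 * z))⁻¹) (𝓝[<] (0:ℝ)) atTop := by
  have hS : Tendsto (fun z : ℝ => Real.sqrt (z ^ 2 - 2 * z)) (𝓝[<] (0:ℝ)) (𝓝[>] 0) := by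
    rw [tendsto_nhdsWithin_iff]
    constructor
    · have hc : ContinuousAt (fun z : ℝ => Real.sqrt (z ^ 2 - 2 * z)) 0 := by
        apply (Real.continuous_sqrt.continuousAt).comp
        fun_prop
      have h0 : Real.sqrt ((0:ℝ) ^ 2 - 2 * 0) = 0 := by norm_num
      have := hc.tendsto.mono_left (nhdsWithin_le_nhds (s := Set.Iio (0:ℝ)))
      rwa [h0] at this
    · filter_upwards [self_mem_nhdsWithin] with z hz
      exact Real.sqrt_pos.mpr (sq_pos hz)
  exact tendsto_inv_nhdsGT_zero.comp hS

lemma tendsto_main (μ lam : ℝ) :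
    Tendsto (fun z : ℝ => (1 + lam * (z - 1) - μ * lam)
      + (lam * z - 2 * lam - μ * lam) * (z / Real.sqrt (z ^ 2 - 2 * z)))
      (𝓝[<] (0:ℝ)) (𝓝 (1 - lam - μ * lam)) := by
  have h1 : Tendsto (fun z : ℝ => 1 + lam * (z - 1) - μ * lam) (𝓝[<] (0:ℝ))
      (𝓝 (1 - lam - μ * lam)) := by
    have hc : Continuous (fun z : ℝ => 1 + lam * (z - 1) - μ * lam) := by fun_prop
    have h := (hc.tendsto 0).mono_left (nhdsWithin_le_nhds (s := Set.Iio (0:ℝ)))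
    convert h using 2
    ring
  have h2 : Tendsto (fun z : ℝ => (lam * z - 2 * lam - μ * lam) *
      (z / Real.sqrt (z ^ 2 - 2 * z))) (𝓝[<] (0:ℝ)) (𝓝 0) := by
    have hcc : Continuous (fun z : ℝ => lam * z - 2 * lam - μ * lam) := by fun_prop
    have hc := (hcc.tendsto 0).mono_left
      (nhdsWithin_le_nhds (s := Set.Iio (0:ℝ)))
    simpa using hc.mul tendsto_zdivS
  simpa using h1.add h2

end DetLimitsAux

open DetLimitsAux in
/-- If `μλ + μ + λ > 0` then `Δ(μ,λ;z) → +∞` as `z → 0⁻`; if `μλ + μ + λ < 0` then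
`Δ(μ,λ;z) → −∞` as `z → 0⁻`; and if `μλ + μ + λ = 0` then `Δ(μ,λ;z) → 1 + μ` as
`z → 0⁻` (so this limit is negative when `μ < −1` and positive when `μ > −1`). -/
theorem det_limits_left_of_zero (μ lam : ℝ) :
    (0 < μ * lam + μ + lam → Tendsto (fun z => Δdet μ lam z) (𝓝[<] (0:ℝ)) atTop) ∧
    (μ * lam + μ + lam < 0 → Tendsto (fun z => Δdet μ lam z) (𝓝[<] (0:ℝ)) atBot) ∧
    (μ * lam + μ + lam = 0 → Tendsto (fun z => Δdet μ lam z) (𝓝[<] (0:ℝ)) (𝓝 (1 + μ))) ∧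
    (μ < -1 → 1 + μ < 0) ∧ (-1 < μ → 0 < 1 + μ) := by
  have heq : ∀ᶠ z in 𝓝[<] (0:ℝ), ((1 + lam * (z - 1) - μ * lam)
      + (lam * z - 2 * lam - μ * lam) * (z / Real.sqrt (z ^ 2 - 2 * z)))
      + (μ * lam + μ + lam) * (Real.sqrt (z ^ 2 - 2 * z))⁻¹ = Δdet μ lam z := by
    filter_upwards [self_mem_nhdsWithin] with z hz
    rw [delta_formula μ lam hz]
  refine ⟨?_, ?_, ?_, fun h => by linarith, fun h => by linarith⟩
  · intro hL
    refine Tendsto.congr' heq ?_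
    exact (tendsto_main μ lam).add_atTop (tendsto_invS.const_mul_atTop hL)
  · intro hL
    refine Tendsto.congr' heq ?_
    exact (tendsto_main μ lam).add_atBot
      (Tendsto.const_mul_atTop_of_neg hL tendsto_invS)
  · intro hL
    refine Tendsto.congr' heq ?_
    rw [hL]
    simp only [zero_mul, add_zero]
    have : 1 - lam - μ * lam = 1 + μ := by linarith
    rw [← this]
    exact tendsto_main μ lam
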